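/- Let Λ be a strongly connected finite k-graph, and suppose v ∈ Λ^0 and m, n ∈ ℕ^k satisfy σ^m(x) = σ^n(x) for all x ∈ Z(v). Then for each μ ∈ Λ^m there exists a unique element θ_{m,n}(μ) ∈ Λ^n such that μx = θ_{m,n}(μ)x for all x ∈ Z(s(μ)), and the resulting map θ_{m,n} : Λ^m → Λ^n satisfies r(θ_{m,n}(μ)) = r(μ) and s(θ_{m,n}(μ)) = s(μ) for all μ ∈ Λ^m. -/

import Mathlib

/-- A higher-rank graph (`k`-graph): a countable category with a degree functor
`d : Λ → ℕ^k` satisfying the unique factorisation property.  Morphisms are called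
paths; the vertices are the paths of degree `0` (the identity morphisms).
`r` and `s` are the codomain (range) and domain (source) maps.  By convention
`Λ^{e_i} ≠ ∅` for each standard generator `e_i` of `ℕ^k`. -/
structure KGraph (k : ℕ) where
  Path : Type
  countable : Countable Path
  d : Path → Fin k → ℕ
  r : Path → Path
  s : Path → Path
  d_r : ∀ lam, d (r lam) = 0
  d_s : ∀ lam, d (s lam) = 0
  r_vertex : ∀ v, d v = 0 → r v = v
  s_vertex : ∀ v, d v = 0 → s v = v
  comp : ∀ μ ν : Path, s μ = r ν → Path
  r_comp : ∀ μ ν h, r (comp μ ν h) = r μ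
  s_comp : ∀ μ ν h, s (comp μ ν h) = s ν
  d_comp : ∀ μ ν h, d (comp μ ν h) = d μ + d ν
  id_comp : ∀ lam (h : s (r lam) = r lam), comp (r lam) lam h = lam
  comp_id : ∀ lam (h : s lam = r (s lam)), comp lam (s lam) h = lam
  assoc : ∀ μ ν τ (h1 : s μ = r ν) (h2 : s ν = r τ)
      (h3 : s (comp μ ν h1) = r τ) (h4 : s μ = r (comp ν τ h2)),
      comp (comp μ ν h1) τ h3 = comp μ (comp ν τ h2) h4
  factor : ∀ (lam : Path) (m n : Fin k → ℕ), d lam = m + n →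
      ∃! μν : Path × Path, ∃ h : s μν.1 = r μν.2,
        d μν.1 = m ∧ d μν.2 = n ∧ comp μν.1 μν.2 h = lam
  edge_nonempty : ∀ i : Fin k, ∃ lam, d lam = Pi.single i 1

namespace KGraph

variable {k : ℕ}

/-- The vertices of a `k`-graph: the paths of degree `0`. -/
abbrev Vertex (Λ : KGraph k) : Type := {v : Λ.Path // Λ.d v = 0}

/-- A `k`-graph is finite if `Λ^n` is finite for every `n ∈ ℕ^k`. -/
def IsFinite (Λ : KGraph k) : Prop := ∀ n : Fin k → ℕ, {lam : Λ.Path | Λ.d lam = n}.Finite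

/-- A `k`-graph is strongly connected if `vΛw ≠ ∅` for all vertices `v, w`. -/
def StronglyConnected (Λ : KGraph k) : Prop :=
  ∀ v w : Λ.Path, Λ.d v = 0 → Λ.d w = 0 → ∃ lam : Λ.Path, Λ.r lam = v ∧ Λ.s lam = w

/-- `Λ^min(μ,ν) = {(α,β) : μα = νβ, d(μα) = d(μ) ∨ d(ν)}`. -/
def minSet (Λ : KGraph k) (μ ν : Λ.Path) : Set (Λ.Path × Λ.Path) :=
  {p | ∃ (h1 : Λ.s μ = Λ.r p.1) (h2 : Λ.s ν = Λ.r p.2),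
      Λ.comp μ p.1 h1 = Λ.comp ν p.2 h2 ∧ Λ.d μ + Λ.d p.1 = Λ.d μ ⊔ Λ.d ν}

end KGraph

/-- An infinite path in a `k`-graph `Λ`: a degree-preserving functor `x : Ω_k → Λ`,
recorded by its values `x(m,n)` for `m ≤ n` in `ℕ^k`. -/
structure InfinitePath {k : ℕ} (Λ : KGraph k) where
  toFun : ∀ m n : Fin k → ℕ, m ≤ n → Λ.Path
  d_eq : ∀ m n h, Λ.d (toFun m n h) = n - m
  src : ∀ m n h, Λ.s (toFun m n h) = toFun n n le_rfl
  rng : ∀ m n h, Λ.r (toFun m n h) = toFun m m le_rfl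
  comp_eq : ∀ m n p (h1 : m ≤ n) (h2 : n ≤ p)
      (hc : Λ.s (toFun m n h1) = Λ.r (toFun n p h2)),
      Λ.comp (toFun m n h1) (toFun n p h2) hc = toFun m p (h1.trans h2)

namespace InfinitePath

variable {k : ℕ} {Λ : KGraph k}

/-- The shift map `σ^n` on the infinite-path space, `σ^n(x)(p,q) = x(n+p, n+q)`. -/
def shift (x : InfinitePath Λ) (n : Fin k → ℕ) : InfinitePath Λ where
  toFun p q h := x.toFun (n + p) (n + q) (by gcongr)
  d_eq p q h := by
    rw [x.d_eq]
    funext i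
    exact Nat.add_sub_add_left (n i) (q i) (p i)
  src p q h := x.src _ _ _
  rng p q h := x.rng _ _ _
  comp_eq p q t h1 h2 hc := x.comp_eq _ _ _ _ _ hc

/-- The range `r(x) = x(0,0)` of an infinite path. -/
def range (x : InfinitePath Λ) : Λ.Path := x.toFun 0 0 le_rfl

end InfinitePath

/-- `ExtEq Λ lam y x` says that `y = lam · x`, i.e. `y(0, d(lam)) = lam` and
`σ^{d(lam)}(y) = x`.  (Such an extension is unique when it exists.) -/
def KGraph.ExtEq {k : ℕ} (Λ : KGraph k) (lam : Λ.Path) (y x : InfinitePath Λ) : Prop :=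
  y.toFun 0 (Λ.d lam) (fun i => Nat.zero_le _) = lam ∧ y.shift (Λ.d lam) = x

/-- `Λ.IsTheta m n μ ν` says that `μ ∈ Λ^m`, `ν ∈ Λ^n`, and `μx = νx` for every
infinite path `x ∈ Z(s(μ))`; i.e. `ν = θ_{m,n}(μ)`. -/
def KGraph.IsTheta {k : ℕ} (Λ : KGraph k) (m n : Fin k → ℕ) (μ ν : Λ.Path) : Prop :=
  Λ.d μ = m ∧ Λ.d ν = n ∧
    ∀ x : InfinitePath Λ, x.range = Λ.s μ →
      ∃ y : InfinitePath Λ, Λ.ExtEq μ y x ∧ Λ.ExtEq ν y x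

/-- The periodicity group `Per Λ = {m − n : σ^m(x) = σ^n(x) for all x ∈ Λ^∞} ⊆ ℤ^k`. -/
def KGraph.Per {k : ℕ} (Λ : KGraph k) : Set (Fin k → ℤ) :=
  {g | ∃ m n : Fin k → ℕ, (∀ i, (m i : ℤ) - n i = g i) ∧
      ∀ x : InfinitePath Λ, x.shift m = x.shift n}

/-- `Λ` is aperiodic if every vertex `v` admits `x ∈ Z(v)` with
`σ^m(x) ≠ σ^n(x)` for all `m ≠ n` in `ℕ^k`. -/
def KGraph.Aperiodic {k : ℕ} (Λ : KGraph k) : Prop :=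
  ∀ v : Λ.Path, Λ.d v = 0 → ∃ x : InfinitePath Λ, x.range = v ∧
    ∀ m n : Fin k → ℕ, m ≠ n → x.shift m ≠ x.shift n
namespace KGraph

variable {k : ℕ} (Λ : KGraph k)

lemma pi_add_sub_of_le {p q : Fin k → ℕ} (h : p ≤ q) : p + (q - p) = q := by
  funext i
  have hi : p i ≤ q i := h i
  simp only [Pi.add_apply, Pi.sub_apply]
  omega

/-- The first factor of `lam` of degree `p`. -/
noncomputable def lead (lam : Λ.Path) (p : Fin k → ℕ) (h : p ≤ Λ.d lam) : Λ.Path :=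
  (Λ.factor lam p (Λ.d lam - p) (pi_add_sub_of_le h).symm).exists.choose.1

/-- The second factor of `lam` after degree `p`. -/
noncomputable def rest (lam : Λ.Path) (p : Fin k → ℕ) (h : p ≤ Λ.d lam) : Λ.Path :=
  (Λ.factor lam p (Λ.d lam - p) (pi_add_sub_of_le h).symm).exists.choose.2

lemma split_spec (lam : Λ.Path) (p : Fin k → ℕ) (h : p ≤ Λ.d lam) :
    ∃ hc : Λ.s (Λ.lead lam p h) = Λ.r (Λ.rest lam p h),
      Λ.d (Λ.lead lam p h) = p ∧ Λ.d (Λ.rest lam p h) = Λ.d lam - p ∧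
      Λ.comp (Λ.lead lam p h) (Λ.rest lam p h) hc = lam :=
  (Λ.factor lam p (Λ.d lam - p) (pi_add_sub_of_le h).symm).exists.choose_spec

lemma d_lead (lam p h) : Λ.d (Λ.lead lam p h) = p := (Λ.split_spec lam p h).choose_spec.1

lemma d_rest (lam p h) : Λ.d (Λ.rest lam p h) = Λ.d lam - p :=
  (Λ.split_spec lam p h).choose_spec.2.1

lemma s_lead (lam p h) : Λ.s (Λ.lead lam p h) = Λ.r (Λ.rest lam p h) :=
  (Λ.split_spec lam p h).choose

lemma comp_lead_rest (lam p h) :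
    Λ.comp (Λ.lead lam p h) (Λ.rest lam p h) (Λ.s_lead lam p h) = lam :=
  (Λ.split_spec lam p h).choose_spec.2.2

lemma split_unique {lam : Λ.Path} {p : Fin k → ℕ} (h : p ≤ Λ.d lam) {a b : Λ.Path}
    (hc : Λ.s a = Λ.r b) (hda : Λ.d a = p) (hab : Λ.comp a b hc = lam) :
    a = Λ.lead lam p h ∧ b = Λ.rest lam p h := by
  have hdb : Λ.d b = Λ.d lam - p := by
    have h2 := Λ.d_comp a b hc
    rw [hab, hda] at h2
    funext i
    have h3 := congrFun h2 i
    have hi : p i ≤ Λ.d lam i := h i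
    simp only [Pi.add_apply, Pi.sub_apply] at h3 ⊢
    omega
  have h1 := (Λ.factor lam p (Λ.d lam - p) (pi_add_sub_of_le h).symm).unique
    (y₁ := (a, b)) (y₂ := (Λ.lead lam p h, Λ.rest lam p h))
    ⟨hc, hda, hdb, hab⟩ (Λ.split_spec lam p h)
  exact ⟨congrArg Prod.fst h1, congrArg Prod.snd h1⟩

lemma r_lead (lam p h) : Λ.r (Λ.lead lam p h) = Λ.r lam := by
  conv_rhs => rw [← Λ.comp_lead_rest lam p h]
  rw [Λ.r_comp]

lemma s_rest (lam p h) : Λ.s (Λ.rest lam p h) = Λ.s lam := by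
  conv_rhs => rw [← Λ.comp_lead_rest lam p h]
  rw [Λ.s_comp]

lemma lead_zero (lam : Λ.Path) (h : 0 ≤ Λ.d lam) : Λ.lead lam 0 h = Λ.r lam :=
  ((Λ.split_unique h (by rw [Λ.s_vertex _ (Λ.d_r lam)]) (Λ.d_r lam) (Λ.id_comp lam _)).1).symm

lemma rest_zero (lam : Λ.Path) (h : 0 ≤ Λ.d lam) : Λ.rest lam 0 h = lam :=
  ((Λ.split_unique h (by rw [Λ.s_vertex _ (Λ.d_r lam)]) (Λ.d_r lam) (Λ.id_comp lam _)).2).symm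

lemma lead_full (lam : Λ.Path) (h : Λ.d lam ≤ Λ.d lam) : Λ.lead lam (Λ.d lam) h = lam :=
  ((Λ.split_unique h (by rw [Λ.r_vertex _ (Λ.d_s lam)]) rfl (Λ.comp_id lam _)).1).symm

lemma rest_full (lam : Λ.Path) (h : Λ.d lam ≤ Λ.d lam) : Λ.rest lam (Λ.d lam) h = Λ.s lam :=
  ((Λ.split_unique h (by rw [Λ.r_vertex _ (Λ.d_s lam)]) rfl (Λ.comp_id lam _)).2).symm

end KGraph
namespace KGraph

variable {k : ℕ} (Λ : KGraph k)

lemma comp_hcongr {a a' b b' : Λ.Path} (ha : a = a') (hb : b = b') (hc : Λ.s a = Λ.r b) :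
    Λ.comp a b hc = Λ.comp a' b' (by rw [← ha, ← hb]; exact hc) := by
  subst ha; subst hb; rfl

lemma lead_congr {lam lam' : Λ.Path} (h : lam = lam') {p : Fin k → ℕ} (hp : p ≤ Λ.d lam) :
    Λ.lead lam p hp = Λ.lead lam' p (h ▸ hp) := by subst h; rfl

lemma rest_congr {lam lam' : Λ.Path} (h : lam = lam') {p : Fin k → ℕ} (hp : p ≤ Λ.d lam) :
    Λ.rest lam p hp = Λ.rest lam' p (h ▸ hp) := by subst h; rfl

lemma lead_comp (a b : Λ.Path) (hc : Λ.s a = Λ.r b) (p : Fin k → ℕ)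
    (hp : p ≤ Λ.d a) (hle : p ≤ Λ.d (Λ.comp a b hc)) :
    Λ.lead (Λ.comp a b hc) p hle = Λ.lead a p hp ∧
    Λ.rest (Λ.comp a b hc) p hle =
      Λ.comp (Λ.rest a p hp) b (by rw [Λ.s_rest]; exact hc) := by
  have hc2 : Λ.s (Λ.rest a p hp) = Λ.r b := by rw [Λ.s_rest]; exact hc
  have hc' : Λ.s (Λ.lead a p hp) = Λ.r (Λ.comp (Λ.rest a p hp) b hc2) := by
    rw [Λ.r_comp]; exact Λ.s_lead a p hp
  have h3 : Λ.s (Λ.comp (Λ.lead a p hp) (Λ.rest a p hp) (Λ.s_lead a p hp)) = Λ.r b := by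
    rw [Λ.s_comp]; exact hc2
  have hab : Λ.comp (Λ.lead a p hp) (Λ.comp (Λ.rest a p hp) b hc2) hc' = Λ.comp a b hc := by
    rw [← Λ.assoc _ _ _ (Λ.s_lead a p hp) hc2 h3 hc']
    exact (Λ.comp_hcongr (Λ.comp_lead_rest a p hp) rfl h3).symm ▸ rfl
  have := Λ.split_unique hle hc' (Λ.d_lead a p hp) hab
  exact ⟨this.1.symm, this.2.symm⟩

lemma lead_comp_full (a b : Λ.Path) (hc : Λ.s a = Λ.r b) (hle : Λ.d a ≤ Λ.d (Λ.comp a b hc)) :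
    Λ.lead (Λ.comp a b hc) (Λ.d a) hle = a ∧ Λ.rest (Λ.comp a b hc) (Λ.d a) hle = b := by
  have := Λ.split_unique hle hc rfl rfl
  exact ⟨this.1.symm, this.2.symm⟩

lemma lead_comp_add (a b : Λ.Path) (hc : Λ.s a = Λ.r b) (e : Fin k → ℕ)
    (he : e ≤ Λ.d b) (hle : Λ.d a + e ≤ Λ.d (Λ.comp a b hc)) :
    Λ.lead (Λ.comp a b hc) (Λ.d a + e) hle =
      Λ.comp a (Λ.lead b e he) (by rw [Λ.r_lead]; exact hc) ∧
    Λ.rest (Λ.comp a b hc) (Λ.d a + e) hle = Λ.rest b e he := by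
  have hca : Λ.s a = Λ.r (Λ.lead b e he) := by rw [Λ.r_lead]; exact hc
  have hc' : Λ.s (Λ.comp a (Λ.lead b e he) hca) = Λ.r (Λ.rest b e he) := by
    rw [Λ.s_comp]; exact Λ.s_lead b e he
  have hab : Λ.comp (Λ.comp a (Λ.lead b e he) hca) (Λ.rest b e he) hc' = Λ.comp a b hc := by
    rw [Λ.assoc _ _ _ hca (Λ.s_lead b e he) hc'
      (by rw [Λ.r_comp, Λ.r_lead]; exact hc)]
    exact Λ.comp_hcongr rfl (Λ.comp_lead_rest b e he) _
  have hda : Λ.d (Λ.comp a (Λ.lead b e he) hca) = Λ.d a + e := by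
    rw [Λ.d_comp, Λ.d_lead]
  have := Λ.split_unique hle hc' hda hab
  exact ⟨this.1.symm, this.2.symm⟩

lemma lead_lead (lam : Λ.Path) (p q : Fin k → ℕ) (hq : q ≤ Λ.d lam)
    (hp : p ≤ q) (hp' : p ≤ Λ.d (Λ.lead lam q hq)) (hple : p ≤ Λ.d lam) :
    Λ.lead (Λ.lead lam q hq) p hp' = Λ.lead lam p hple := by
  have h1 := (Λ.lead_comp (Λ.lead lam q hq) (Λ.rest lam q hq) (Λ.s_lead lam q hq) p hp'
    (by rw [Λ.comp_lead_rest]; exact hple)).1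
  rw [← h1]
  exact Λ.lead_congr (Λ.comp_lead_rest lam q hq) _

end KGraph
namespace KGraph

variable {k : ℕ} (Λ : KGraph k)

lemma exists_emit_single (hsc : Λ.StronglyConnected) (u : Λ.Path) (hu : Λ.d u = 0)
    (i : Fin k) : ∃ lam, Λ.r lam = u ∧ Λ.d lam = Pi.single i 1 := by
  obtain ⟨lam0, hd0⟩ := Λ.edge_nonempty i
  obtain ⟨τ, hrτ, hsτ⟩ := hsc u (Λ.r lam0) hu (Λ.d_r lam0)
  have hle : Pi.single i 1 ≤ Λ.d (Λ.comp τ lam0 hsτ) := by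
    rw [Λ.d_comp, hd0]
    intro j
    exact Nat.le_add_left _ _
  refine ⟨Λ.lead _ (Pi.single i 1) hle, ?_, Λ.d_lead _ _ _⟩
  rw [Λ.r_lead, Λ.r_comp, hrτ]

lemma exists_receive_single (hsc : Λ.StronglyConnected) (u : Λ.Path) (hu : Λ.d u = 0)
    (i : Fin k) : ∃ lam, Λ.s lam = u ∧ Λ.d lam = Pi.single i 1 := by
  obtain ⟨lam0, hd0⟩ := Λ.edge_nonempty i
  obtain ⟨τ, hrτ, hsτ⟩ := hsc (Λ.s lam0) u (Λ.d_s lam0) hu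
  have hc : Λ.s lam0 = Λ.r τ := hrτ.symm
  have hle : Λ.d τ ≤ Λ.d (Λ.comp lam0 τ hc) := by
    rw [Λ.d_comp]
    intro j
    exact Nat.le_add_left _ _
  refine ⟨Λ.rest _ (Λ.d τ) hle, ?_, ?_⟩
  · rw [Λ.s_rest, Λ.s_comp, hsτ]
  · rw [Λ.d_rest, Λ.d_comp, hd0]
    funext j
    simp only [Pi.add_apply, Pi.sub_apply]
    omega

lemma exists_emit (hsc : Λ.StronglyConnected) :
    ∀ (q : Fin k → ℕ) (u : Λ.Path), Λ.d u = 0 → ∃ lam, Λ.r lam = u ∧ Λ.d lam = q := by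
  suffices h : ∀ (N : ℕ) (q : Fin k → ℕ), (∑ j, q j) = N → ∀ u, Λ.d u = 0 →
      ∃ lam, Λ.r lam = u ∧ Λ.d lam = q by
    exact fun q u hu => h _ q rfl u hu
  intro N
  induction N using Nat.strong_induction_on with
  | _ N ih =>
    intro q hq u hu
    by_cases h0 : q = 0
    · exact ⟨u, Λ.r_vertex u hu, by rw [hu, h0]⟩
    · have : ∃ i, q i ≠ 0 := by
        by_contra hc
        push_neg at hc
        exact h0 (funext fun i => hc i)
      obtain ⟨i, hi⟩ := this
      obtain ⟨lam1, hr1, hd1⟩ := Λ.exists_emit_single hsc u hu i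
      have hsum : (∑ j, (q - Pi.single i 1 : Fin k → ℕ) j) < N := by
        rw [← hq]
        have h1 : ∀ j, (q - Pi.single i 1 : Fin k → ℕ) j ≤ q j := by
          intro j
          simp only [Pi.sub_apply]
          omega
        have h2 : (q - Pi.single i 1 : Fin k → ℕ) i < q i := by
          simp only [Pi.sub_apply, Pi.single_eq_same]
          omega
        exact Finset.sum_lt_sum (fun j _ => h1 j) ⟨i, Finset.mem_univ i, h2⟩
      obtain ⟨lam2, hr2, hd2⟩ := ih _ hsum (q - Pi.single i 1 : Fin k → ℕ) rfl (Λ.s lam1) (Λ.d_s lam1)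
      have hc : Λ.s lam1 = Λ.r lam2 := hr2.symm
      refine ⟨Λ.comp lam1 lam2 hc, by rw [Λ.r_comp, hr1], ?_⟩
      rw [Λ.d_comp, hd1, hd2]
      funext j
      simp only [Pi.add_apply, Pi.sub_apply]
      rcases eq_or_ne j i with rfl | hji
      · simp only [Pi.single_eq_same]
        omega
      · simp [Pi.single_eq_of_ne hji]

lemma exists_receive (hsc : Λ.StronglyConnected) :
    ∀ (q : Fin k → ℕ) (u : Λ.Path), Λ.d u = 0 → ∃ lam, Λ.s lam = u ∧ Λ.d lam = q := by
  suffices h : ∀ (N : ℕ) (q : Fin k → ℕ), (∑ j, q j) = N → ∀ u, Λ.d u = 0 →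
      ∃ lam, Λ.s lam = u ∧ Λ.d lam = q by
    exact fun q u hu => h _ q rfl u hu
  intro N
  induction N using Nat.strong_induction_on with
  | _ N ih =>
    intro q hq u hu
    by_cases h0 : q = 0
    · exact ⟨u, Λ.s_vertex u hu, by rw [hu, h0]⟩
    · have : ∃ i, q i ≠ 0 := by
        by_contra hc
        push_neg at hc
        exact h0 (funext fun i => hc i)
      obtain ⟨i, hi⟩ := this
      obtain ⟨lam1, hs1, hd1⟩ := Λ.exists_receive_single hsc u hu i
      have hsum : (∑ j, (q - Pi.single i 1 : Fin k → ℕ) j) < N := by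
        rw [← hq]
        have h1 : ∀ j, (q - Pi.single i 1 : Fin k → ℕ) j ≤ q j := by
          intro j
          simp only [Pi.sub_apply]
          omega
        have h2 : (q - Pi.single i 1 : Fin k → ℕ) i < q i := by
          simp only [Pi.sub_apply, Pi.single_eq_same]
          omega
        exact Finset.sum_lt_sum (fun j _ => h1 j) ⟨i, Finset.mem_univ i, h2⟩
      obtain ⟨lam2, hs2, hd2⟩ := ih _ hsum (q - Pi.single i 1 : Fin k → ℕ) rfl (Λ.r lam1) (Λ.d_r lam1)
      have hc : Λ.s lam2 = Λ.r lam1 := hs2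
      refine ⟨Λ.comp lam2 lam1 hc, by rw [Λ.s_comp, hs1], ?_⟩
      rw [Λ.d_comp, hd1, hd2]
      funext j
      simp only [Pi.add_apply, Pi.sub_apply]
      rcases eq_or_ne j i with rfl | hji
      · simp only [Pi.single_eq_same]
        omega
      · simp [Pi.single_eq_of_ne hji]

end KGraph
namespace InfinitePath

variable {k : ℕ} {Λ : KGraph k}

lemma ext' {x y : InfinitePath Λ}
    (h : ∀ m n (hmn : m ≤ n), x.toFun m n hmn = y.toFun m n hmn) : x = y := by
  cases x with
  | mk xf xd xs xr xc =>
    cases y with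
    | mk yf yd ys yr yc =>
      have : xf = yf := by
        funext m n hmn
        exact h m n hmn
      subst this
      rfl

lemma toFun_congr (x : InfinitePath Λ) {a b a' b' : Fin k → ℕ} (ha : a = a') (hb : b = b')
    (h : a ≤ b) : x.toFun a b h = x.toFun a' b' (ha ▸ hb ▸ h) := by
  subst ha; subst hb; rfl

lemma d_toFun0 (x : InfinitePath Λ) (a : Fin k → ℕ) (h : (0 : Fin k → ℕ) ≤ a) :
    Λ.d (x.toFun 0 a h) = a := by
  rw [x.d_eq]
  funext i
  simp

lemma lead_toFun (x : InfinitePath Λ) (a c : Fin k → ℕ) (hac : a ≤ c)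
    (h' : a ≤ Λ.d (x.toFun 0 c (zero_le))) :
    Λ.lead (x.toFun 0 c (zero_le)) a h' = x.toFun 0 a (zero_le) ∧
    Λ.rest (x.toFun 0 c (zero_le)) a h' = x.toFun a c hac := by
  have hc : Λ.s (x.toFun 0 a (zero_le)) = Λ.r (x.toFun a c hac) := by
    rw [x.src, x.rng]
  have hcomp := x.comp_eq 0 a c (zero_le) hac hc
  have hd : Λ.d (x.toFun 0 a (zero_le)) = a := x.d_toFun0 a _
  have := Λ.split_unique h' hc hd (by rw [hcomp])
  exact ⟨this.1.symm, this.2.symm⟩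

lemma shift_toFun (x : InfinitePath Λ) (a : Fin k → ℕ) (p q : Fin k → ℕ) (h : p ≤ q) :
    (x.shift a).toFun p q h = x.toFun (a + p) (a + q) (add_le_add_right h a) := rfl

lemma shift_shift (x : InfinitePath Λ) (a b : Fin k → ℕ) :
    (x.shift a).shift b = x.shift (a + b) := by
  apply ext'
  intro p q hpq
  rw [shift_toFun, shift_toFun, shift_toFun]
  exact x.toFun_congr (by rw [add_assoc]) (by rw [add_assoc]) _

lemma range_shift (x : InfinitePath Λ) (a : Fin k → ℕ) :
    (x.shift a).range = x.toFun a a le_rfl := by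
  show x.toFun (a + 0) (a + 0) _ = x.toFun a a le_rfl
  exact x.toFun_congr (by rw [add_zero]) (by rw [add_zero]) _

lemma d_range (x : InfinitePath Λ) : Λ.d x.range = 0 := by
  have := x.d_toFun0 0 le_rfl
  exact this

end InfinitePath
namespace KGraph

variable {k : ℕ} (Λ : KGraph k)

lemma lead_icongr (lam : Λ.Path) {p p' : Fin k → ℕ} (h : p = p') (hp : p ≤ Λ.d lam) :
    Λ.lead lam p hp = Λ.lead lam p' (h ▸ hp) := by subst h; rfl

lemma rest_icongr (lam : Λ.Path) {p p' : Fin k → ℕ} (h : p = p') (hp : p ≤ Λ.d lam) :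
    Λ.rest lam p hp = Λ.rest lam p' (h ▸ hp) := by subst h; rfl

/-- Build an infinite path from a coherent family of initial segments. -/
noncomputable def ofSeq (f : (Fin k → ℕ) → Λ.Path) (hd : ∀ q, Λ.d (f q) = q)
    (hcompat : ∀ p q (hpq : p ≤ q), Λ.lead (f q) p (by rw [hd]; exact hpq) = f p) :
    InfinitePath Λ where
  toFun p q hpq := Λ.rest (f q) p (by rw [hd]; exact hpq)
  d_eq p q hpq := by rw [Λ.d_rest, hd]
  src p q hpq := by
    rw [Λ.s_rest]
    exact ((Λ.rest_icongr (f q) (hd q).symm _).trans (Λ.rest_full (f q) le_rfl)).symm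
  rng p q hpq := by
    rw [← Λ.s_lead (f q) p _, hcompat p q hpq]
    exact ((Λ.rest_icongr (f p) (hd p).symm _).trans (Λ.rest_full (f p) le_rfl)).symm
  comp_eq p q t h1 h2 hc := by
    have hn' : q ≤ Λ.d (f t) := by rw [hd]; exact h2
    have hl : Λ.lead (f t) q hn' = f q := hcompat q t h2
    have hc' : Λ.s (f q) = Λ.r (Λ.rest (f t) q hn') := by
      rw [← hl]; exact Λ.s_lead (f t) q hn'
    have heq : Λ.comp (f q) (Λ.rest (f t) q hn') hc' = f t := by
      conv_rhs => rw [← Λ.comp_lead_rest (f t) q hn']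
      exact Λ.comp_hcongr hl.symm rfl hc'
    have hm2 : p ≤ Λ.d (Λ.comp (f q) (Λ.rest (f t) q hn') hc') := by
      rw [heq, hd]; exact h1.trans h2
    have h4 := (Λ.lead_comp (f q) (Λ.rest (f t) q hn') hc' p (by rw [hd]; exact h1) hm2).2
    exact h4.symm.trans (Λ.rest_congr heq hm2)

lemma ofSeq_zero (f : (Fin k → ℕ) → Λ.Path) (hd : ∀ q, Λ.d (f q) = q)
    (hcompat : ∀ p q (hpq : p ≤ q), Λ.lead (f q) p (by rw [hd]; exact hpq) = f p)
    (q : Fin k → ℕ) (h : (0 : Fin k → ℕ) ≤ q) :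
    (Λ.ofSeq f hd hcompat).toFun 0 q h = f q := Λ.rest_zero (f q) (by rw [hd]; exact h)

lemma extend_hc (lam : Λ.Path) (x : InfinitePath Λ) (hx : x.range = Λ.s lam)
    (q : Fin k → ℕ) : Λ.s lam = Λ.r (x.toFun 0 q (zero_le)) := by
  rw [x.rng]; exact hx.symm

lemma extend_hq (lam : Λ.Path) (x : InfinitePath Λ) (hx : x.range = Λ.s lam)
    (q : Fin k → ℕ) :
    q ≤ Λ.d (Λ.comp lam (x.toFun 0 q (zero_le)) (Λ.extend_hc lam x hx q)) := by
  rw [Λ.d_comp, x.d_toFun0]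
  intro i
  exact Nat.le_add_left _ _

/-- The initial segments of the extension `lam · x`. -/
noncomputable def extendSeq (lam : Λ.Path) (x : InfinitePath Λ) (hx : x.range = Λ.s lam)
    (q : Fin k → ℕ) : Λ.Path :=
  Λ.lead (Λ.comp lam (x.toFun 0 q (zero_le)) (Λ.extend_hc lam x hx q)) q
    (Λ.extend_hq lam x hx q)

lemma d_extendSeq (lam : Λ.Path) (x : InfinitePath Λ) (hx : x.range = Λ.s lam)
    (q : Fin k → ℕ) : Λ.d (Λ.extendSeq lam x hx q) = q := Λ.d_lead _ _ _

lemma extend_assoc (lam : Λ.Path) (x : InfinitePath Λ) (hx : x.range = Λ.s lam)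
    (p q : Fin k → ℕ) (hpq : p ≤ q) :
    Λ.comp lam (x.toFun 0 q (zero_le)) (Λ.extend_hc lam x hx q) =
    Λ.comp (Λ.comp lam (x.toFun 0 p (zero_le)) (Λ.extend_hc lam x hx p)) (x.toFun p q hpq)
      (by rw [Λ.s_comp, x.src, x.rng]) := by
  have hc2 : Λ.s (x.toFun 0 p (zero_le)) = Λ.r (x.toFun p q hpq) := by
    rw [x.src, x.rng]
  have hx0q : x.toFun 0 q (zero_le) = Λ.comp (x.toFun 0 p (zero_le)) (x.toFun p q hpq) hc2 :=
    (x.comp_eq 0 p q (zero_le) hpq hc2).symm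
  rw [Λ.assoc lam (x.toFun 0 p (zero_le)) (x.toFun p q hpq) (Λ.extend_hc lam x hx p) hc2 _
    (by rw [Λ.r_comp]; exact Λ.extend_hc lam x hx p)]
  exact Λ.comp_hcongr rfl hx0q _

lemma extendSeq_compat (lam : Λ.Path) (x : InfinitePath Λ) (hx : x.range = Λ.s lam)
    (p q : Fin k → ℕ) (hpq : p ≤ q)
    (hple : p ≤ Λ.d (Λ.extendSeq lam x hx q)) :
    Λ.lead (Λ.extendSeq lam x hx q) p hple = Λ.extendSeq lam x hx p := by
  have hple2 : p ≤ Λ.d (Λ.comp lam (x.toFun 0 q (zero_le)) (Λ.extend_hc lam x hx q)) := by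
    rw [Λ.d_comp, x.d_toFun0]
    intro i
    exact le_trans (hpq i) (Nat.le_add_left _ _)
  have h1 := Λ.lead_lead (Λ.comp lam (x.toFun 0 q (zero_le)) (Λ.extend_hc lam x hx q))
    p q (Λ.extend_hq lam x hx q) hpq hple hple2
  exact h1.trans ((Λ.lead_congr (Λ.extend_assoc lam x hx p q hpq) hple2).trans
    (Λ.lead_comp _ (x.toFun p q hpq) _ p (Λ.extend_hq lam x hx p) _).1)

/-- The extension `lam · x` of an infinite path `x` by a finite path `lam`. -/
noncomputable def extend (lam : Λ.Path) (x : InfinitePath Λ) (hx : x.range = Λ.s lam) :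
    InfinitePath Λ :=
  Λ.ofSeq (Λ.extendSeq lam x hx) (Λ.d_extendSeq lam x hx)
    (fun p q hpq => Λ.extendSeq_compat lam x hx p q hpq _)

lemma extend_toFun0 (lam : Λ.Path) (x : InfinitePath Λ) (hx : x.range = Λ.s lam)
    (q : Fin k → ℕ) (h : (0 : Fin k → ℕ) ≤ q) :
    (Λ.extend lam x hx).toFun 0 q h = Λ.extendSeq lam x hx q :=
  Λ.ofSeq_zero _ _ _ q h

lemma extendSeq_add (lam : Λ.Path) (x : InfinitePath Λ) (hx : x.range = Λ.s lam)
    (q : Fin k → ℕ) :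
    Λ.extendSeq lam x hx (Λ.d lam + q) =
      Λ.comp lam (x.toFun 0 q (zero_le)) (Λ.extend_hc lam x hx q) := by
  unfold extendSeq
  have hle : q ≤ Λ.d lam + q := fun i => Nat.le_add_left _ _
  rw [Λ.lead_congr (Λ.extend_assoc lam x hx q (Λ.d lam + q) hle)]
  have hid : Λ.d lam + q = Λ.d (Λ.comp lam (x.toFun 0 q (zero_le)) (Λ.extend_hc lam x hx q)) := by
    rw [Λ.d_comp, x.d_toFun0]
  rw [Λ.lead_icongr _ hid]
  exact (Λ.lead_comp_full _ _ _ _).1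

lemma extEq_extend (lam : Λ.Path) (x : InfinitePath Λ) (hx : x.range = Λ.s lam) :
    Λ.ExtEq lam (Λ.extend lam x hx) x := by
  constructor
  · rw [Λ.extend_toFun0]
    exact (Λ.lead_comp_full lam (x.toFun 0 (Λ.d lam) (zero_le))
      (Λ.extend_hc lam x hx (Λ.d lam)) (Λ.extend_hq lam x hx (Λ.d lam))).1
  · apply InfinitePath.ext'
    intro p q hpq
    have hle1 : Λ.d lam + p ≤ Λ.d (Λ.extendSeq lam x hx (Λ.d lam + q)) := by
      rw [Λ.d_extendSeq]
      exact add_le_add_right hpq _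
    show Λ.rest (Λ.extendSeq lam x hx (Λ.d lam + q)) (Λ.d lam + p) hle1 = x.toFun p q hpq
    refine (Λ.rest_congr (Λ.extendSeq_add lam x hx q) hle1).trans ?_
    refine (Λ.rest_congr (Λ.extend_assoc lam x hx p q hpq) _).trans ?_
    have hid : (Λ.d lam + p) =
        Λ.d (Λ.comp lam (x.toFun 0 p (zero_le)) (Λ.extend_hc lam x hx p)) := by
      rw [Λ.d_comp, x.d_toFun0]
    refine (Λ.rest_icongr _ hid _).trans ?_
    exact (Λ.lead_comp_full _ _ _ _).2

lemma extEq_range' {lam : Λ.Path} {y x : InfinitePath Λ} (hE : Λ.ExtEq lam y x) :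
    y.range = Λ.r lam := by
  have h1 := y.rng 0 (Λ.d lam) (zero_le)
  rw [hE.1] at h1
  exact h1.symm

lemma extEq_srange {lam : Λ.Path} {y x : InfinitePath Λ} (hE : Λ.ExtEq lam y x) :
    x.range = Λ.s lam := by
  have h1 := y.src 0 (Λ.d lam) (zero_le)
  rw [hE.1] at h1
  rw [← hE.2, InfinitePath.range_shift]
  exact h1.symm

lemma extEq_window {lam : Λ.Path} {y x : InfinitePath Λ} (hE : Λ.ExtEq lam y x)
    (b : Fin k → ℕ) :
    y.toFun 0 (Λ.d lam + b) (zero_le) =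
      Λ.comp lam (x.toFun 0 b (zero_le)) (Λ.extend_hc lam x (Λ.extEq_srange hE) b) := by
  have h2b : y.toFun (Λ.d lam) (Λ.d lam + b) (fun i => Nat.le_add_right _ _) =
      x.toFun 0 b (zero_le) := by
    rw [← hE.2, InfinitePath.shift_toFun]
    exact y.toFun_congr (add_zero (Λ.d lam)).symm rfl _
  have hcY : Λ.s (y.toFun 0 (Λ.d lam) (zero_le)) =
      Λ.r (y.toFun (Λ.d lam) (Λ.d lam + b) (fun i => Nat.le_add_right _ _)) := by
    rw [y.src, y.rng]
  calc y.toFun 0 (Λ.d lam + b) (zero_le)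
      = Λ.comp (y.toFun 0 (Λ.d lam) (zero_le))
          (y.toFun (Λ.d lam) (Λ.d lam + b) (fun i => Nat.le_add_right _ _)) hcY :=
        (y.comp_eq 0 (Λ.d lam) (Λ.d lam + b) (zero_le) (fun i => Nat.le_add_right _ _) hcY).symm
    _ = Λ.comp lam (x.toFun 0 b (zero_le))
          (Λ.extend_hc lam x (Λ.extEq_srange hE) b) := Λ.comp_hcongr hE.1 h2b hcY

lemma extEq_toFun0 {lam : Λ.Path} {y x : InfinitePath Λ} (hE : Λ.ExtEq lam y x)
    (hx : x.range = Λ.s lam) (b : Fin k → ℕ) :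
    y.toFun 0 b (zero_le) = Λ.extendSeq lam x hx b := by
  have hwin := Λ.extEq_window hE b
  have hlt : b ≤ Λ.d (y.toFun 0 (Λ.d lam + b) (zero_le)) := by
    rw [y.d_toFun0]
    exact fun i => Nat.le_add_left _ _
  have h5 := (y.lead_toFun b (Λ.d lam + b) (fun i => Nat.le_add_left _ _) hlt).1
  rw [← h5, Λ.lead_congr hwin]
  rfl

lemma extEq_unique {lam : Λ.Path} {y x : InfinitePath Λ} (hE : Λ.ExtEq lam y x)
    (hx : x.range = Λ.s lam) : y = Λ.extend lam x hx := by
  apply InfinitePath.ext'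
  intro p q hpq
  have hrest := (y.lead_toFun p q hpq (by rw [y.d_toFun0]; exact hpq)).2
  rw [← hrest, Λ.rest_congr (Λ.extEq_toFun0 hE hx q)]
  rfl

end KGraph
namespace KGraph

/-- An infinite chain of degree-`(1,…,1)` paths starting at `u`. -/
noncomputable def chain {k : ℕ} (Λ : KGraph k) (hg : ∀ w : Λ.Path, Λ.d w = 0 →
    { lam : Λ.Path // Λ.r lam = w ∧ Λ.d lam = fun _ => 1 }) (u : Λ.Path) : ℕ → Λ.Path
  | 0 => u
  | N + 1 => Λ.comp (chain Λ hg u N) (hg (Λ.s (chain Λ hg u N)) (Λ.d_s _)).1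
      ((hg (Λ.s (chain Λ hg u N)) (Λ.d_s _)).2.1).symm

variable {k : ℕ} (Λ : KGraph k)

lemma d_chain (hg) (u : Λ.Path) (hu : Λ.d u = 0) (N : ℕ) :
    Λ.d (Λ.chain hg u N) = fun _ => N := by
  induction N with
  | zero => show Λ.d u = _; rw [hu]; rfl
  | succ N ih =>
    show Λ.d (Λ.comp _ _ _) = _
    rw [Λ.d_comp, ih, (hg (Λ.s (Λ.chain hg u N)) (Λ.d_s _)).2.2]
    funext i
    simp [Pi.add_apply]

lemma chain_step (hg) (u : Λ.Path) (N M : ℕ) (hNM : N ≤ M) :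
    ∃ (ρ : Λ.Path) (hc : Λ.s (Λ.chain hg u N) = Λ.r ρ),
      Λ.chain hg u M = Λ.comp (Λ.chain hg u N) ρ hc := by
  induction M, hNM using Nat.le_induction with
  | base =>
    exact ⟨Λ.s (Λ.chain hg u N), (Λ.r_vertex _ (Λ.d_s _)).symm,
      (Λ.comp_id _ _).symm⟩
  | succ M hNM ih =>
    obtain ⟨ρ, hc, hM⟩ := ih
    have hcg : Λ.s (Λ.chain hg u M) = Λ.r (hg (Λ.s (Λ.chain hg u M)) (Λ.d_s _)).1 :=
      ((hg (Λ.s (Λ.chain hg u M)) (Λ.d_s _)).2.1).symm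
    have hsρ : Λ.s ρ = Λ.s (Λ.chain hg u M) := by rw [hM, Λ.s_comp]
    have hcρg : Λ.s ρ = Λ.r (hg (Λ.s (Λ.chain hg u M)) (Λ.d_s _)).1 := hsρ.trans hcg
    refine ⟨Λ.comp ρ (hg (Λ.s (Λ.chain hg u M)) (Λ.d_s _)).1 hcρg,
      by rw [Λ.r_comp]; exact hc, ?_⟩
    show Λ.comp (Λ.chain hg u M) (hg (Λ.s (Λ.chain hg u M)) (Λ.d_s _)).1 hcg = _
    exact (Λ.comp_hcongr hM rfl hcg).trans (Λ.assoc _ _ _ hc hcρg _ _)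

/-- Every vertex is the range of an infinite path. -/
lemma exists_inf_path (hsc : Λ.StronglyConnected) (u : Λ.Path) (hu : Λ.d u = 0) :
    ∃ x : InfinitePath Λ, x.range = u := by
  have hg : ∀ w : Λ.Path, Λ.d w = 0 →
      { lam : Λ.Path // Λ.r lam = w ∧ Λ.d lam = fun _ => 1 } := fun w hw =>
    Classical.indefiniteDescription _ (by
      obtain ⟨lam, h1, h2⟩ := Λ.exists_emit hsc (fun _ => 1) w hw
      exact ⟨lam, h1, h2⟩)
  have hdom : ∀ (p : Fin k → ℕ) (N : ℕ), (∀ i, p i ≤ N) → p ≤ Λ.d (Λ.chain hg u N) := by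
    intro p N hp
    rw [Λ.d_chain hg u hu]
    exact hp
  have hle : ∀ q : Fin k → ℕ, q ≤ Λ.d (Λ.chain hg u (∑ j, q j)) := fun q =>
    hdom q _ (fun i => Finset.single_le_sum (f := fun j => q j)
      (fun j _ => Nat.zero_le _) (Finset.mem_univ i))
  set f : (Fin k → ℕ) → Λ.Path := fun q => Λ.lead (Λ.chain hg u (∑ j, q j)) q (hle q) with hf
  have hd : ∀ q, Λ.d (f q) = q := fun q => Λ.d_lead _ _ _
  have stepup : ∀ (p : Fin k → ℕ) (N M : ℕ) (hNM : N ≤ M) (hpN : p ≤ Λ.d (Λ.chain hg u N))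
      (hpM : p ≤ Λ.d (Λ.chain hg u M)),
      Λ.lead (Λ.chain hg u M) p hpM = Λ.lead (Λ.chain hg u N) p hpN := by
    intro p N M hNM hpN hpM
    obtain ⟨ρ, hc, hM⟩ := Λ.chain_step hg u N M hNM
    rw [Λ.lead_congr hM hpM]
    exact (Λ.lead_comp _ ρ hc p hpN _).1
  have hchainN : ∀ (p : Fin k → ℕ) (N : ℕ) (hpN : p ≤ Λ.d (Λ.chain hg u N)),
      Λ.lead (Λ.chain hg u N) p hpN = f p := by
    intro p N hpN
    have hpN' : ∀ i, p i ≤ N := by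
      intro i
      have := hpN i
      rwa [Λ.d_chain hg u hu] at this
    set K := max N (∑ j, p j) with hK
    have hpK : p ≤ Λ.d (Λ.chain hg u K) :=
      hdom p K (fun i => le_trans (hpN' i) (le_max_left _ _))
    rw [← stepup p N K (le_max_left _ _) hpN hpK,
      stepup p (∑ j, p j) K (le_max_right _ _) (hle p) hpK]
  have hcompat : ∀ p q (hpq : p ≤ q), Λ.lead (f q) p (by rw [hd]; exact hpq) = f p := by
    intro p q hpq
    have h1 := Λ.lead_lead (Λ.chain hg u (∑ j, q j)) p q (hle q) hpq
      (by rw [hd]; exact hpq) (fun i => (hpq i).trans (hle q i))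
    exact h1.trans (hchainN p _ _)
  refine ⟨Λ.ofSeq f hd hcompat, ?_⟩
  have h1 : (Λ.ofSeq f hd hcompat).toFun 0 0 le_rfl = f 0 := Λ.ofSeq_zero _ _ _ _ _
  show (Λ.ofSeq f hd hcompat).toFun 0 0 le_rfl = u
  rw [h1]
  show Λ.lead (Λ.chain hg u (∑ j, (0 : Fin k → ℕ) j)) 0 (hle 0) = u
  refine (Λ.lead_zero _ (hle 0)).trans ?_
  have hch : Λ.chain hg u (∑ j, (0 : Fin k → ℕ) j) = u := by
    rw [show (∑ j, (0 : Fin k → ℕ) j) = 0 by simp]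
    rfl
  rw [hch]
  exact Λ.r_vertex u hu

/-- Extends the hypothesis `σ^m = σ^n` on `Z(v)` to all infinite paths. -/
lemma shifts_eq_all (hsc : Λ.StronglyConnected) (v : Λ.Path) (hv : Λ.d v = 0)
    (m n : Fin k → ℕ)
    (h : ∀ x : InfinitePath Λ, x.range = v → x.shift m = x.shift n) :
    ∀ x : InfinitePath Λ, x.shift m = x.shift n := by
  intro x
  obtain ⟨lam, hr, hs⟩ := hsc v x.range hv x.d_range
  have hx : x.range = Λ.s lam := hs.symm
  have hE := Λ.extEq_extend lam x hx
  set y := Λ.extend lam x hx with hy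
  have hyr : y.range = v := by rw [Λ.extEq_range' hE, hr]
  have hmn := h y hyr
  calc x.shift m = ((y.shift (Λ.d lam)).shift m) := by rw [hE.2]
    _ = y.shift (Λ.d lam + m) := InfinitePath.shift_shift y _ m
    _ = (y.shift m).shift (Λ.d lam) := by
        rw [InfinitePath.shift_shift, add_comm]
    _ = (y.shift n).shift (Λ.d lam) := by rw [hmn]
    _ = y.shift (n + Λ.d lam) := InfinitePath.shift_shift y _ _
    _ = (y.shift (Λ.d lam)).shift n := by
        rw [InfinitePath.shift_shift, add_comm]
    _ = x.shift n := by rw [hE.2]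

end KGraph
namespace KGraph

variable {k : ℕ} (Λ : KGraph k)

lemma theta_companion (m n : Fin k → ℕ)
    (hAll : ∀ x : InfinitePath Λ, x.shift m = x.shift n)
    (μ : Λ.Path) (hμ : Λ.d μ = m) (x : InfinitePath Λ) (hx : x.range = Λ.s μ) :
    (Λ.extend μ x hx).shift n = x ∧
    Λ.ExtEq ((Λ.extend μ x hx).toFun 0 n (zero_le)) (Λ.extend μ x hx) x := by
  have hE := Λ.extEq_extend μ x hx
  have h1 : (Λ.extend μ x hx).shift n = x := by
    rw [← hAll (Λ.extend μ x hx), ← hμ]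
    exact hE.2
  refine ⟨h1, ?_, ?_⟩
  · exact (Λ.extend μ x hx).toFun_congr rfl ((Λ.extend μ x hx).d_toFun0 n (zero_le)) _
  · rw [(Λ.extend μ x hx).d_toFun0 n (zero_le)]
    exact h1

lemma theta_rigid (hsc : Λ.StronglyConnected) (m n : Fin k → ℕ)
    (hAll : ∀ x : InfinitePath Λ, x.shift m = x.shift n)
    (ν₂ : Λ.Path) (hd2 : Λ.d ν₂ = fun i => n i - min (m i) (n i)) :
    ∃ t : Λ.Path, Λ.r t = Λ.r ν₂ ∧ ∀ (x : InfinitePath Λ) (hx : x.range = Λ.s ν₂),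
      Λ.lead (Λ.comp ν₂ (x.toFun 0 (fun i => m i - min (m i) (n i)) (zero_le))
          (Λ.extend_hc ν₂ x hx _)) (fun i => m i - min (m i) (n i))
        (Λ.extend_hq ν₂ x hx _) = t := by
  obtain ⟨μ'', hsμ'', hdμ''⟩ := Λ.exists_receive hsc m (Λ.r ν₂) (Λ.d_r ν₂)
  have hcΘ : Λ.s μ'' = Λ.r ν₂ := hsμ''
  have hnΘ : n ≤ Λ.d (Λ.comp μ'' ν₂ hcΘ) := by
    rw [Λ.d_comp, hdμ'', hd2]
    intro i
    simp only [Pi.add_apply]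
    omega
  have hkey : ∀ (x : InfinitePath Λ) (hx : x.range = Λ.s ν₂),
      Λ.lead (Λ.comp ν₂ (x.toFun 0 (fun i => m i - min (m i) (n i)) (zero_le))
          (Λ.extend_hc ν₂ x hx _)) (fun i => m i - min (m i) (n i))
        (Λ.extend_hq ν₂ x hx _) = Λ.rest (Λ.comp μ'' ν₂ hcΘ) n hnΘ := by
    intro x hx
    set X := Λ.extend ν₂ x hx with hXdef
    have hEX := Λ.extEq_extend ν₂ x hx
    have hXr : X.range = Λ.s μ'' := (Λ.extEq_range' hEX).trans hsμ''.symm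
    have hEY := Λ.extEq_extend μ'' X hXr
    obtain ⟨hYs, hEν''⟩ := Λ.theta_companion m n hAll μ'' hdμ'' X hXr
    set Y := Λ.extend μ'' X hXr with hYdef
    set ν'' := Y.toFun 0 n (zero_le) with hν''def
    have hdν'' : Λ.d ν'' = n := Y.d_toFun0 n _
    have hwin1 := Λ.extEq_window hEY (fun i => n i - min (m i) (n i))
    have hXp : X.toFun 0 (fun i => n i - min (m i) (n i)) (zero_le) = ν₂ :=
      (X.toFun_congr rfl hd2.symm _).trans hEX.1
    have hwin1' : Y.toFun 0 (Λ.d μ'' + fun i => n i - min (m i) (n i)) (zero_le) =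
        Λ.comp μ'' ν₂ hcΘ := hwin1.trans (Λ.comp_hcongr rfl hXp _)
    have hwin2 := Λ.extEq_window hEν'' (fun i => m i - min (m i) (n i))
    have hidx : (Λ.d ν'' + fun i => m i - min (m i) (n i)) =
        (Λ.d μ'' + fun i => n i - min (m i) (n i)) := by
      rw [hdν'', hdμ'']
      funext i
      simp only [Pi.add_apply]
      omega
    have hΘ := hwin2.symm.trans ((Y.toFun_congr rfl hidx _).trans hwin1')
    have hXq := (Λ.split_unique hnΘ _ hdν'' hΘ).2
    have hwin0 := Λ.extEq_window hEX (fun i => m i - min (m i) (n i))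
    have hqle : (fun i => m i - min (m i) (n i)) ≤
        Λ.d ν₂ + fun i => m i - min (m i) (n i) := fun i => Nat.le_add_left _ _
    have h5 := (X.lead_toFun (fun i => m i - min (m i) (n i))
      (Λ.d ν₂ + fun i => m i - min (m i) (n i)) hqle (by rw [X.d_toFun0]; exact hqle)).1
    exact ((Λ.lead_congr hwin0.symm _).trans h5).trans hXq
  refine ⟨Λ.rest (Λ.comp μ'' ν₂ hcΘ) n hnΘ, ?_, hkey⟩
  have hsν₂ : Λ.d (Λ.s ν₂) = 0 := Λ.d_s ν₂
  obtain ⟨x₀, hx₀⟩ := Λ.exists_inf_path hsc (Λ.s ν₂) hsν₂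
  rw [← hkey x₀ hx₀, Λ.r_lead, Λ.r_comp]

end KGraph

/-- If `σ^m(x) = σ^n(x)` for all `x ∈ Z(v)`, then for each `μ ∈ Λ^m` there is a unique
`θ_{m,n}(μ) ∈ Λ^n` with `μx = θ_{m,n}(μ)x` for all `x ∈ Z(s(μ))`, and the map
`θ_{m,n}` is range- and source-preserving. -/
theorem theta_exists_unique {k : ℕ} (Λ : KGraph k)
    (hfin : Λ.IsFinite) (hsc : Λ.StronglyConnected)
    (v : Λ.Path) (hv : Λ.d v = 0) (m n : Fin k → ℕ)
    (h : ∀ x : InfinitePath Λ, x.range = v → x.shift m = x.shift n) :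
    ∀ μ : Λ.Path, Λ.d μ = m →
      (∃! ν : Λ.Path, Λ.d ν = n ∧
          ∀ x : InfinitePath Λ, x.range = Λ.s μ →
            ∃ y : InfinitePath Λ, Λ.ExtEq μ y x ∧ Λ.ExtEq ν y x) ∧
      ∀ ν : Λ.Path,
        (Λ.d ν = n ∧ ∀ x : InfinitePath Λ, x.range = Λ.s μ →
            ∃ y : InfinitePath Λ, Λ.ExtEq μ y x ∧ Λ.ExtEq ν y x) →
        Λ.r ν = Λ.r μ ∧ Λ.s ν = Λ.s μ := by
  intro μ hμ
  have hAll := Λ.shifts_eq_all hsc v hv m n h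
  obtain ⟨x, hx⟩ := Λ.exists_inf_path hsc (Λ.s μ) (Λ.d_s μ)
  have hEμ := Λ.extEq_extend μ x hx
  obtain ⟨hysn, hEν⟩ := Λ.theta_companion m n hAll μ hμ x hx
  set y := Λ.extend μ x hx with hy
  set ν := y.toFun 0 n (zero_le) with hν
  have hdν : Λ.d ν = n := y.d_toFun0 n _
  have hsν : Λ.s ν = Λ.s μ := by
    have h1 := y.src 0 n (zero_le)
    have h2 : y.toFun n n le_rfl = x.range := by
      rw [← InfinitePath.range_shift, hysn]
    exact h1.trans (h2.trans hx)
  have hrν : Λ.r ν = Λ.r μ := by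
    have h3 := y.rng 0 n (zero_le)
    have h4 := y.rng 0 (Λ.d μ) (zero_le)
    rw [hEμ.1] at h4
    exact h3.trans h4.symm
  -- split ν into ν₁ (degree m ∧ n) and ν₂ (degree n - m ∧ n)
  have hcn : (fun i => min (m i) (n i)) ≤ Λ.d ν := by
    rw [hdν]
    intro i
    exact min_le_right _ _
  set ν₁ := Λ.lead ν (fun i => min (m i) (n i)) hcn with hν₁
  set ν₂ := Λ.rest ν (fun i => min (m i) (n i)) hcn with hν₂
  have hdν₂ : Λ.d ν₂ = fun i => n i - min (m i) (n i) := by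
    rw [hν₂, Λ.d_rest, hdν]
    funext i
    simp [Pi.sub_apply]
  obtain ⟨t, hrt, ht⟩ := Λ.theta_rigid hsc m n hAll ν₂ hdν₂
  have hct : Λ.s ν₁ = Λ.r t := by
    rw [hrt, hν₁, hν₂]
    exact Λ.s_lead ν _ hcn
  have master : ∀ (Y X : InfinitePath Λ) (hE : Λ.ExtEq ν Y X),
      Y.toFun 0 m (zero_le) = Λ.comp ν₁ t hct := by
    intro Y X hE
    have hXν₂ : X.range = Λ.s ν₂ := by
      rw [hν₂, Λ.s_rest]
      exact Λ.extEq_srange hE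
    have hwin := Λ.extEq_window hE (fun i => m i - min (m i) (n i))
    have hmle : m ≤ Λ.d ν + fun i => m i - min (m i) (n i) := by
      rw [hdν]
      intro i
      simp only [Pi.add_apply]
      omega
    have h6 := (Y.lead_toFun m (Λ.d ν + fun i => m i - min (m i) (n i)) hmle
      (by rw [Y.d_toFun0]; exact hmle)).1
    have hcν₂X : Λ.s ν₂ = Λ.r (X.toFun 0 (fun i => m i - min (m i) (n i)) (zero_le)) :=
      Λ.extend_hc ν₂ X hXν₂ _
    have hcB : Λ.s ν₁ = Λ.r (Λ.comp ν₂
        (X.toFun 0 (fun i => m i - min (m i) (n i)) (zero_le)) hcν₂X) := by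
      rw [Λ.r_comp, hν₁, hν₂]
      exact Λ.s_lead ν _ hcn
    have hstep : Λ.comp ν (X.toFun 0 (fun i => m i - min (m i) (n i)) (zero_le))
          (Λ.extend_hc ν X (Λ.extEq_srange hE) _)
        = Λ.comp ν₁ (Λ.comp ν₂
            (X.toFun 0 (fun i => m i - min (m i) (n i)) (zero_le)) hcν₂X) hcB := by
      refine (Λ.comp_hcongr (Λ.comp_lead_rest ν (fun i => min (m i) (n i)) hcn).symm rfl _).trans ?_
      exact Λ.assoc _ _ _ _ hcν₂X _ _
    have hidm : m = Λ.d ν₁ + fun i => m i - min (m i) (n i) := by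
      rw [hν₁, Λ.d_lead]
      funext i
      simp only [Pi.add_apply]
      omega
    refine h6.symm.trans ?_
    refine (Λ.lead_congr hwin _).trans ?_
    refine (Λ.lead_congr hstep _).trans ?_
    refine (Λ.lead_icongr _ hidm _).trans ?_
    refine ((Λ.lead_comp_add ν₁ _ hcB _ (Λ.extend_hq ν₂ X hXν₂ _) _).1).trans ?_
    exact Λ.comp_hcongr rfl (ht X hXν₂) _
  have h10 : y.toFun 0 m (zero_le) = μ :=
    (y.toFun_congr rfl hμ.symm _).trans hEμ.1
  have hprop : ∀ x' : InfinitePath Λ, x'.range = Λ.s μ →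
      ∃ y' : InfinitePath Λ, Λ.ExtEq μ y' x' ∧ Λ.ExtEq ν y' x' := by
    intro x' hx'
    have hx'ν : x'.range = Λ.s ν := hx'.trans hsν.symm
    have hEνz := Λ.extEq_extend ν x' hx'ν
    set z := Λ.extend ν x' hx'ν with hz
    have hzm : z.toFun 0 m (zero_le) = μ :=
      (master z x' hEνz).trans ((master y x hEν).symm.trans h10)
    have hEμz : Λ.ExtEq μ z x' := by
      constructor
      · exact (z.toFun_congr rfl hμ _).trans hzm
      · rw [hμ, hAll z]
        have h11 := hEνz.2
        rw [hdν] at h11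
        exact h11
    exact ⟨z, hEμz, hEνz⟩
  have huniqfun : ∀ ν' : Λ.Path, (Λ.d ν' = n ∧
      ∀ x'' : InfinitePath Λ, x''.range = Λ.s μ →
        ∃ y' : InfinitePath Λ, Λ.ExtEq μ y' x'' ∧ Λ.ExtEq ν' y' x'') → ν' = ν := by
    intro ν' ⟨hdν', hp'⟩
    obtain ⟨y₁, hEμ1, hEν'1⟩ := hp' x hx
    have hy1 : y₁ = y := Λ.extEq_unique hEμ1 hx
    calc ν' = y₁.toFun 0 (Λ.d ν') (zero_le) := hEν'1.1.symm
      _ = y₁.toFun 0 n (zero_le) := y₁.toFun_congr rfl hdν' _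
      _ = y.toFun 0 n (zero_le) := by rw [hy1]
      _ = ν := hν.symm
  refine ⟨⟨ν, ⟨hdν, hprop⟩, huniqfun⟩, ?_⟩
  intro ν' hP
  rw [huniqfun ν' hP]
  exact ⟨hrν, hsν⟩
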